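/- For a positive integer n, the function g(s) = (s^{n+1} − s^{−(n+1)})/(s^n − s^{−n}) is strictly increasing on (1, ∞). -/

import Mathlib

lemma poly_pos (y : ℝ) (hy : 1 < y) :
    ∀ n : ℕ, 1 ≤ n → 0 < y ^ (2 * n + 1) - (2 * n + 1) * y ^ (n + 1) + (2 * n + 1) * y ^ n - 1 := by
  intro n
  induction n with
  | zero => intro h; omega
  | succ m ih =>
    intro _
    rcases Nat.eq_zero_or_pos m with hm | hm
    · subst hm
      have e : y ^ (2 * 1 + 1) - (2 * (1:ℕ) + 1) * y ^ (1 + 1) + (2 * (1:ℕ) + 1) * y ^ 1 - 1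
          = (y - 1) ^ 3 := by push_cast; ring
      rw [e]
      have : (0:ℝ) < y - 1 := by linarith
      positivity
    · have h1 := ih hm
      have key : y ^ (2 * (m + 1) + 1) - (2 * (m + 1 : ℕ) + 1) * y ^ ((m + 1) + 1)
            + (2 * (m + 1 : ℕ) + 1) * y ^ (m + 1) - 1
          = y * (y ^ (2 * m + 1) - (2 * m + 1) * y ^ (m + 1) + (2 * m + 1) * y ^ m - 1)
            + (y - 1) * (y ^ (m + 1) - 1) ^ 2 := by push_cast; ring
      have hy0 : (0:ℝ) < y := by linarith
      have h3 : (1:ℝ) < y ^ (m + 1) := one_lt_pow₀ hy (by omega)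
      rw [key]
      push_cast
      push_cast at h1
      nlinarith

/-- For a positive integer `n`, the function
`g(s) = (s^(n+1) - s⁻¹^(n+1)) / (s^n - s⁻¹^n)` is strictly increasing on `(1, ∞)`. -/
theorem g_strictMonoOn (n : ℕ) (hn : 0 < n) :
    StrictMonoOn (fun s : ℝ => (s ^ (n + 1) - s⁻¹ ^ (n + 1)) / (s ^ n - s⁻¹ ^ n))
      (Set.Ioi 1) := by
  obtain ⟨m, rfl⟩ : ∃ m, n = m + 1 := ⟨n - 1, by omega⟩
  have hD : ∀ x : ℝ, x ∈ Set.Ioi (1:ℝ) → 0 < x ^ (m+1) - x⁻¹ ^ (m+1) := by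
    intro x hx
    simp only [Set.mem_Ioi] at hx
    have h1 : 1 < x ^ (m+1) := one_lt_pow₀ hx (by omega)
    have h2 : x⁻¹ ^ (m+1) < 1 := by
      have hxi : x⁻¹ < 1 := by rw [inv_lt_one_iff₀]; right; exact hx
      exact pow_lt_one₀ (by positivity) hxi (by omega)
    linarith
  have hderiv : ∀ x : ℝ, x ∈ Set.Ioi (1:ℝ) →
      HasDerivAt (fun s : ℝ => (s ^ (m+1 + 1) - s⁻¹ ^ (m+1 + 1)) / (s ^ (m+1) - s⁻¹ ^ (m+1)))
        ((((m+2 : ℕ) * x ^ (m+1) - (m+2 : ℕ) * x⁻¹ ^ (m+1) * (-(x^2)⁻¹)) * (x ^ (m+1) - x⁻¹ ^ (m+1))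
          - (x ^ (m+2) - x⁻¹ ^ (m+2)) * ((m+1 : ℕ) * x ^ m - (m+1 : ℕ) * x⁻¹ ^ m * (-(x^2)⁻¹)))
          / (x ^ (m+1) - x⁻¹ ^ (m+1)) ^ 2) x := by
    intro x hx
    simp only [Set.mem_Ioi] at hx
    have hx0 : x ≠ 0 := by positivity
    have hinv := hasDerivAt_inv hx0
    have hN : HasDerivAt (fun s : ℝ => s ^ (m+1+1) - s⁻¹ ^ (m+1+1))
        ((m+2 : ℕ) * x ^ (m+1) - (m+2 : ℕ) * x⁻¹ ^ (m+1) * (-(x^2)⁻¹)) x := by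
      have h1 := hasDerivAt_pow (m+2) x
      have h2 := hinv.pow (m+2)
      simpa [Pi.sub_def, Pi.pow_def] using h1.sub h2
    have hDd : HasDerivAt (fun s : ℝ => s ^ (m+1) - s⁻¹ ^ (m+1))
        ((m+1 : ℕ) * x ^ m - (m+1 : ℕ) * x⁻¹ ^ m * (-(x^2)⁻¹)) x := by
      have h1 := hasDerivAt_pow (m+1) x
      have h2 := hinv.pow (m+1)
      simpa [Pi.sub_def, Pi.pow_def] using h1.sub h2
    exact hN.div hDd (ne_of_gt (hD x hx))
  have hpos : ∀ x : ℝ, x ∈ Set.Ioi (1:ℝ) →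
      0 < (((m+2 : ℕ) * x ^ (m+1) - (m+2 : ℕ) * x⁻¹ ^ (m+1) * (-(x^2)⁻¹)) * (x ^ (m+1) - x⁻¹ ^ (m+1))
          - (x ^ (m+2) - x⁻¹ ^ (m+2)) * ((m+1 : ℕ) * x ^ m - (m+1 : ℕ) * x⁻¹ ^ m * (-(x^2)⁻¹)))
          / (x ^ (m+1) - x⁻¹ ^ (m+1)) ^ 2 := by
    intro x hx
    simp only [Set.mem_Ioi] at hx
    have hx0 : (0:ℝ) < x := by linarith
    have hx0' : x ≠ 0 := ne_of_gt hx0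
    apply div_pos _ (by have := hD x hx; positivity)
    have hy : (1:ℝ) < x ^ 2 := by nlinarith
    have key := poly_pos (x ^ 2) hy (m + 1) (by omega)
    have e1 : (x ^ 2) ^ (2 * (m+1) + 1) = x ^ (4 * m + 6) := by
      rw [← pow_mul]; congr 1 <;> omega
    have e2 : (x ^ 2) ^ ((m+1) + 1) = x ^ (2 * m + 4) := by
      rw [← pow_mul]; congr 1 <;> omega
    have e3 : (x ^ 2) ^ (m+1) = x ^ (2 * m + 2) := by
      rw [← pow_mul]; congr 1 <;> omega
    rw [e1, e2, e3] at key
    push_cast at key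
    have hmul : (((m+2 : ℕ) * x ^ (m+1) - (m+2 : ℕ) * x⁻¹ ^ (m+1) * (-(x^2)⁻¹)) * (x ^ (m+1) - x⁻¹ ^ (m+1))
          - (x ^ (m+2) - x⁻¹ ^ (m+2)) * ((m+1 : ℕ) * x ^ m - (m+1 : ℕ) * x⁻¹ ^ m * (-(x^2)⁻¹)))
          * x ^ (2 * m + 4)
        = x ^ (4 * m + 6) - (2 * (m:ℝ) + 3) * x ^ (2 * m + 4) + (2 * (m:ℝ) + 3) * x ^ (2 * m + 2) - 1 := by
      push_cast
      simp only [inv_pow]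
      field_simp
      ring
    have hxp : (0:ℝ) < x ^ (2 * m + 4) := by positivity
    nlinarith [key, hxp]
  have hcont : ContinuousOn (fun s : ℝ => (s ^ (m+1 + 1) - s⁻¹ ^ (m+1 + 1)) / (s ^ (m+1) - s⁻¹ ^ (m+1)))
      (Set.Ioi 1) :=
    fun x hx => ((hderiv x hx).differentiableAt.continuousAt).continuousWithinAt
  apply strictMonoOn_of_deriv_pos (convex_Ioi 1) hcont
  intro x hx
  rw [interior_Ioi] at hx
  rw [(hderiv x hx).deriv]
  exact hpos x hx
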